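/- Let y ∈ R^N be fixed and let f be drawn uniformly from the unit sphere S^{N−1} ⊂ R^N (N ≥ 2, y ≠ 0). Then for any η > 0, the probability that the angle between f and y lies outside [π/2 − η, π/2 + η] is at most 2·exp(−(N−1)·sin²(η)/2) (a concentration-of-measure bound implying near-orthogonality with high probability for large N). -/

import Mathlib

open MeasureTheory
open scoped RealInnerProductSpace

section Aux

variable {N : ℕ}

local notation "E" => EuclideanSpace ℝ (Fin N)

lemma exists_isometry_map_unit (u v : E) (hu : ‖u‖ = 1) (hv : ‖v‖ = 1) :
    ∃ L : E ≃ₗᵢ[ℝ] E, L u = v :=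
  ⟨Submodule.reflection (ℝ ∙ (u - v))ᗮ, Submodule.reflection_sub (hu.trans hv.symm)⟩

lemma cone_subset_ball (u : E) (hu : ‖u‖ = 1) {s : ℝ} (hs0 : 0 < s) (hs1 : s ≤ 1) :
    ∃ (c : E) (ρ : ℝ), 0 ≤ ρ ∧ ρ ^ 2 ≤ Real.exp (-s ^ 2) ∧
      {x : E | s * ‖x‖ < ⟪x, u⟫} ∩ Metric.closedBall 0 1 ⊆ Metric.closedBall c ρ := by
  by_cases h : s ^ 2 ≤ 1 / 2
  · refine ⟨s • u, Real.sqrt (1 - s ^ 2), Real.sqrt_nonneg _, ?_, ?_⟩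
    · rw [Real.sq_sqrt (by nlinarith)]
      have := Real.add_one_le_exp (-s ^ 2)
      linarith
    · rintro x ⟨hx1, hx2⟩
      rw [Metric.mem_closedBall, dist_zero_right] at hx2
      have hr0 : (0 : ℝ) ≤ ‖x‖ := norm_nonneg _
      have hin : s * ‖x‖ ≤ ⟪x, u⟫ := le_of_lt hx1
      have hexp : ‖x - s • u‖ ^ 2 = ‖x‖ ^ 2 - 2 * (s * ⟪x, u⟫) + s ^ 2 := by
        rw [norm_sub_sq_real, real_inner_smul_right, norm_smul]
        simp [hu, abs_of_pos hs0]
      have hsq : ‖x - s • u‖ ^ 2 ≤ 1 - s ^ 2 := by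
        rw [hexp]
        nlinarith [mul_le_mul_of_nonneg_left hin (le_of_lt hs0),
          mul_nonneg (sub_nonneg.2 hx2) (by nlinarith : (0:ℝ) ≤ ‖x‖ + 1 - 2 * s ^ 2)]
      rw [Metric.mem_closedBall, dist_eq_norm]
      have := Real.sqrt_le_sqrt hsq
      rwa [Real.sqrt_sq (norm_nonneg _)] at this
  · refine ⟨(2 * s)⁻¹ • u, (2 * s)⁻¹, by positivity, ?_, ?_⟩
    · have hw1 : 1 / 2 < s ^ 2 := lt_of_not_ge h
      have hw2 : s ^ 2 ≤ 1 := by nlinarith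
      have h1 : Real.exp (1 / 2) ≤ 2 := by
        have hsq : Real.exp (1 / 2) ^ 2 = Real.exp 1 := by
          rw [← Real.exp_nat_mul]; norm_num
        have h4 : Real.exp (1 / 2) ^ 2 ≤ 2 ^ 2 := by
          rw [hsq]; nlinarith [Real.exp_one_lt_d9]
        exact le_of_pow_le_pow_left₀ two_ne_zero (by norm_num) h4
      have h2 : Real.exp 1 ≤ 4 := le_of_lt (lt_trans Real.exp_one_lt_d9 (by norm_num))
      have key := convexOn_exp.2 (Set.mem_univ (1 / 2 : ℝ)) (Set.mem_univ (1 : ℝ))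
        (show (0:ℝ) ≤ 2 - 2 * s ^ 2 by linarith) (show (0:ℝ) ≤ 2 * s ^ 2 - 1 by linarith)
        (show (2 - 2 * s ^ 2) + (2 * s ^ 2 - 1) = 1 by ring)
      simp only [smul_eq_mul] at key
      rw [show (2 - 2 * s ^ 2) * (1 / 2) + (2 * s ^ 2 - 1) * 1 = s ^ 2 by ring] at key
      have hkey : Real.exp (s ^ 2) ≤ 4 * s ^ 2 := by nlinarith
      have hfin : ((2 * s)⁻¹) ^ 2 = ((2 * s) ^ 2)⁻¹ := by rw [inv_pow]
      rw [hfin, Real.exp_neg]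
      apply inv_anti₀ (Real.exp_pos _)
      nlinarith
    · rintro x ⟨hx1, hx2⟩
      rw [Metric.mem_closedBall, dist_zero_right] at hx2
      have hr0 : (0 : ℝ) ≤ ‖x‖ := norm_nonneg _
      have hin : s * ‖x‖ ≤ ⟪x, u⟫ := le_of_lt hx1
      have hs2 : (0 : ℝ) < (2 * s)⁻¹ := by positivity
      have hexp : ‖x - (2 * s)⁻¹ • u‖ ^ 2
          = ‖x‖ ^ 2 - 2 * ((2 * s)⁻¹ * ⟪x, u⟫) + ((2 * s)⁻¹) ^ 2 := by
        rw [norm_sub_sq_real, real_inner_smul_right, norm_smul]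
        simp [hu, abs_of_pos hs2, abs_of_pos hs0]
      have hms : (2 * s)⁻¹ * s = 1 / 2 := by field_simp
      have hsq : ‖x - (2 * s)⁻¹ • u‖ ^ 2 ≤ ((2 * s)⁻¹) ^ 2 := by
        rw [hexp]
        have h3 : (2 * s)⁻¹ * (s * ‖x‖) ≤ (2 * s)⁻¹ * ⟪x, u⟫ :=
          mul_le_mul_of_nonneg_left hin (le_of_lt hs2)
        have h4 : (2 * s)⁻¹ * (s * ‖x‖) = (1 / 2) * ‖x‖ := by
          rw [← mul_assoc, hms]
        nlinarith
      rw [Metric.mem_closedBall, dist_eq_norm]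
      have := Real.sqrt_le_sqrt hsq
      rwa [Real.sqrt_sq (norm_nonneg _), Real.sqrt_sq (le_of_lt hs2)] at this

lemma cone_vol (u : E) (hu : ‖u‖ = 1) {s : ℝ} (hs0 : 0 < s) (hs1 : s ≤ 1) :
    volume ({x : E | s * ‖x‖ < ⟪x, u⟫} ∩ Metric.closedBall 0 1)
      ≤ ENNReal.ofReal (Real.exp (-((N : ℝ) - 1) * s ^ 2 / 2))
        * volume (Metric.closedBall (0 : E) 1) := by
  obtain ⟨c, ρ, hρ0, hρ2, hsub⟩ := cone_subset_ball u hu hs0 hs1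
  calc volume ({x : E | s * ‖x‖ < ⟪x, u⟫} ∩ Metric.closedBall 0 1)
      ≤ volume (Metric.closedBall c ρ) := measure_mono hsub
    _ = ENNReal.ofReal (ρ ^ N) * volume (Metric.closedBall (0 : E) 1) := by
        rw [Measure.addHaar_closedBall' volume c hρ0, finrank_euclideanSpace_fin]
    _ ≤ ENNReal.ofReal (Real.exp (-((N : ℝ) - 1) * s ^ 2 / 2))
        * volume (Metric.closedBall (0 : E) 1) := by
        apply mul_le_mul_left
        apply ENNReal.ofReal_le_ofReal
        have hEpos : (0 : ℝ) < Real.exp (-((N : ℝ) - 1) * s ^ 2 / 2) := Real.exp_pos _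
        apply le_of_pow_le_pow_left₀ (two_ne_zero) (le_of_lt hEpos)
        calc (ρ ^ N) ^ 2 = (ρ ^ 2) ^ N := by ring
          _ ≤ (Real.exp (-s ^ 2)) ^ N := pow_le_pow_left₀ (sq_nonneg ρ) hρ2 N
          _ = Real.exp ((N : ℝ) * (-s ^ 2)) := (Real.exp_nat_mul _ N).symm
          _ ≤ Real.exp (-((N : ℝ) - 1) * s ^ 2) := by
              apply Real.exp_le_exp.2; nlinarith [sq_nonneg s]
          _ = (Real.exp (-((N : ℝ) - 1) * s ^ 2 / 2)) ^ 2 := by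
              rw [← Real.exp_nat_mul]; ring_nf

end Aux
section Fubini

variable {N : ℕ}

local notation "E" => EuclideanSpace ℝ (Fin N)

lemma cone_prob (hN : 1 ≤ N) (μ : Measure E) [IsProbabilityMeasure μ]
    (hsupp : μ (Metric.sphere (0 : E) 1) = 1)
    (hinv : ∀ L : E ≃ₗᵢ[ℝ] E, μ.map L = μ)
    (u : E) (hu : ‖u‖ = 1) {s : ℝ} (hs0 : 0 < s) (hs1 : s ≤ 1) :
    μ {f : E | s * ‖f‖ < ⟪f, u⟫} ≤ ENNReal.ofReal (Real.exp (-((N : ℝ) - 1) * s ^ 2 / 2)) := by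
  haveI : Nontrivial (EuclideanSpace ℝ (Fin N)) :=
    Module.nontrivial_of_finrank_pos (R := ℝ) (by rw [finrank_euclideanSpace_fin]; omega)
  set B : Set E := Metric.closedBall 0 1 with hB
  set A : Set E := {f : E | s * ‖f‖ < ⟪f, u⟫} with hA
  have hAopen : IsOpen A :=
    isOpen_lt (continuous_const.mul continuous_norm) (continuous_id.inner continuous_const)
  set T : Set (E × E) := {p : E × E | s * (‖p.1‖ * ‖p.2‖) < ⟪p.1, p.2⟫} with hT
  have hTopen : IsOpen T :=
    isOpen_lt (continuous_const.mul
      ((continuous_norm.comp continuous_fst).mul (continuous_norm.comp continuous_snd)))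
      continuous_inner
  set ν : Measure E := volume.restrict B with hν
  have hBfin : volume B ≠ ⊤ := (MeasureTheory.measure_closedBall_lt_top).ne
  have hB0 : volume B ≠ 0 := by
    refine (Metric.measure_closedBall_pos volume (0 : E) one_pos).ne'
  -- direction 1 : integrate over x for fixed f
  have dir1 : (μ.prod ν) T
      = volume ({x : E | s * ‖x‖ < ⟪x, u⟫} ∩ B) := by
    rw [Measure.prod_apply hTopen.measurableSet]
    have hae1 : ∀ᵐ f ∂μ, ‖f‖ = 1 := by
      rw [MeasureTheory.ae_iff]
      have : {f : E | ¬ ‖f‖ = 1} = (Metric.sphere (0 : E) 1)ᶜ := by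
        ext f; simp [mem_sphere_zero_iff_norm]
      rw [this, measure_compl Metric.isClosed_sphere.measurableSet
        (measure_ne_top μ _), hsupp]
      simp
    have heq : ∀ᵐ f ∂μ, ν (Prod.mk f ⁻¹' T) = volume ({x : E | s * ‖x‖ < ⟪x, u⟫} ∩ B) := by
      filter_upwards [hae1] with f hf
      have hpre : Prod.mk f ⁻¹' T = {x : E | s * ‖x‖ < ⟪f, x⟫} := by
        ext x; simp [hT, hf]
      obtain ⟨L, hL⟩ := exists_isometry_map_unit f u hf hu
      have hset : {x : E | s * ‖x‖ < ⟪f, x⟫} ∩ B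
          = ⇑L ⁻¹' ({x : E | s * ‖x‖ < ⟪x, u⟫} ∩ B) := by
        ext x
        have h1 : ⟪L x, u⟫ = ⟪f, x⟫ := by
          rw [← hL, L.inner_map_map, real_inner_comm]
        simp only [Set.mem_inter_iff, Set.mem_preimage, Set.mem_setOf_eq, hB,
          Metric.mem_closedBall, dist_zero_right, L.norm_map, h1]
      have hmeas : MeasurableSet ({x : E | s * ‖x‖ < ⟪x, u⟫} ∩ B) :=
        ((isOpen_lt (continuous_const.mul continuous_norm)
          (continuous_id.inner continuous_const)).measurableSet).inter
          Metric.isClosed_closedBall.measurableSet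
      rw [hpre, hν, Measure.restrict_apply (t := {x : E | s * ‖x‖ < ⟪f, x⟫}) (isOpen_lt (continuous_const.mul continuous_norm)
        (continuous_const.inner continuous_id)).measurableSet, hset]
      exact (L.measurePreserving).measure_preimage hmeas.nullMeasurableSet
    rw [lintegral_congr_ae heq, lintegral_const, measure_univ, mul_one]
  -- direction 2 : integrate over f for fixed x
  have dir2 : (μ.prod ν) T = μ A * volume B := by
    rw [Measure.prod_apply_symm hTopen.measurableSet]
    have hae2 : ∀ᵐ x ∂ν, x ≠ (0 : E) := by
      rw [MeasureTheory.ae_iff]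
      rw [show {x : E | ¬ x ≠ 0} = {(0 : E)} by ext z; simp, hν,
        Measure.restrict_apply (measurableSet_singleton _)]
      refine le_antisymm (le_trans (measure_mono Set.inter_subset_left) ?_) zero_le
      simp [measure_singleton]
    have heq2 : ∀ᵐ x ∂ν, μ ((fun f => (f, x)) ⁻¹' T) = μ A := by
      filter_upwards [hae2] with x hx
      have hxn : (0 : ℝ) < ‖x‖ := norm_pos_iff.2 hx
      set v : E := ‖x‖⁻¹ • x with hv
      have hvu : ‖v‖ = 1 := norm_smul_inv_norm hx
      obtain ⟨L, hL⟩ := exists_isometry_map_unit v u hvu hu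
      have hpre : ((fun f : E => (f, x)) ⁻¹' T) = ⇑L ⁻¹' A := by
        ext f
        have h1 : ⟪L f, u⟫ = ⟪f, v⟫ := by rw [← hL, L.inner_map_map]
        have h2 : ⟪f, v⟫ = ‖x‖⁻¹ * ⟪f, x⟫ := real_inner_smul_right _ _ _
        simp only [Set.mem_preimage, hT, Set.mem_setOf_eq, hA, L.norm_map, h1, h2]
        rw [inv_mul_eq_div, lt_div_iff₀ hxn, mul_assoc]
      rw [hpre]
      calc μ (⇑L ⁻¹' A) = (μ.map L) A :=
            (Measure.map_apply L.continuous.measurable hAopen.measurableSet).symm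
        _ = μ A := by rw [hinv L]
    rw [lintegral_congr_ae heq2, lintegral_const, hν, Measure.restrict_apply_univ]
  have hfinal : μ A * volume B ≤ ENNReal.ofReal (Real.exp (-((N : ℝ) - 1) * s ^ 2 / 2))
      * volume B := by
    rw [← dir2, dir1]
    exact cone_vol u hu hs0 hs1
  exact (ENNReal.mul_le_mul_iff_left hB0 hBfin).1 hfinal

end Fubini
/-- Concentration of measure on the sphere: a uniformly random unit vector is
nearly orthogonal to any fixed direction with high probability. -/
theorem random_unit_vector_nearly_orthogonal {N : ℕ} (hN : 2 ≤ N)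
    (μ : Measure (EuclideanSpace ℝ (Fin N))) [IsProbabilityMeasure μ]
    (hsupp : μ (Metric.sphere (0 : EuclideanSpace ℝ (Fin N)) 1) = 1)
    (hinv : ∀ L : EuclideanSpace ℝ (Fin N) ≃ₗᵢ[ℝ] EuclideanSpace ℝ (Fin N),
      μ.map L = μ)
    (y : EuclideanSpace ℝ (Fin N)) (hy : y ≠ 0)
    (η : ℝ) (hη : 0 < η) :
    (μ {f | InnerProductGeometry.angle f y < Real.pi / 2 - η ∨
            Real.pi / 2 + η < InnerProductGeometry.angle f y}).toReal ≤
      2 * Real.exp (-((N : ℝ) - 1) * Real.sin η ^ 2 / 2) := by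
  have hexp_nonneg : (0 : ℝ) ≤ Real.exp (-((N : ℝ) - 1) * Real.sin η ^ 2 / 2) :=
    (Real.exp_pos _).le
  by_cases hη2 : η < Real.pi / 2
  · set s := Real.sin η with hs
    have hs0 : 0 < s := Real.sin_pos_of_pos_of_lt_pi hη (by linarith [Real.pi_pos])
    have hs1 : s ≤ 1 := Real.sin_le_one η
    have hy' : (0 : ℝ) < ‖y‖ := norm_pos_iff.2 hy
    set u : EuclideanSpace ℝ (Fin N) := ‖y‖⁻¹ • y with hudef
    have hu : ‖u‖ = 1 := norm_smul_inv_norm hy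
    set A : Set (EuclideanSpace ℝ (Fin N)) := {f | s * ‖f‖ < ⟪f, u⟫} with hAdef
    set A' : Set (EuclideanSpace ℝ (Fin N)) := {f | ⟪f, u⟫ < -(s * ‖f‖)} with hA'def
    have hAopen : IsOpen A :=
      isOpen_lt (continuous_const.mul continuous_norm) (continuous_id.inner continuous_const)
    have hA'open : IsOpen A' :=
      isOpen_lt (continuous_id.inner continuous_const)
        ((continuous_const.mul continuous_norm).neg)
    set Ev : Set (EuclideanSpace ℝ (Fin N)) :=
      {f | InnerProductGeometry.angle f y < Real.pi / 2 - η ∨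
        Real.pi / 2 + η < InnerProductGeometry.angle f y} with hEv
    have hsubset : Ev ∩ Metric.sphere (0 : EuclideanSpace ℝ (Fin N)) 1 ⊆ A ∪ A' := by
      rintro f ⟨hfE, hfS⟩
      rw [mem_sphere_zero_iff_norm] at hfS
      have hfy : ⟪f, u⟫ = Real.cos (InnerProductGeometry.angle f y) := by
        rw [InnerProductGeometry.cos_angle, hfS, one_mul, hudef, real_inner_smul_right,
          inv_mul_eq_div]
      have hmem2 : InnerProductGeometry.angle f y ∈ Set.Icc 0 Real.pi :=
        ⟨InnerProductGeometry.angle_nonneg f y, InnerProductGeometry.angle_le_pi f y⟩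
      rcases hfE with h | h
      · left
        show s * ‖f‖ < ⟪f, u⟫
        rw [hfS, mul_one, hfy]
        have hmem1 : Real.pi / 2 - η ∈ Set.Icc 0 Real.pi :=
          ⟨by linarith, by linarith [Real.pi_pos]⟩
        have := Real.strictAntiOn_cos hmem2 hmem1 h
        rwa [Real.cos_pi_div_two_sub] at this
      · right
        show ⟪f, u⟫ < -(s * ‖f‖)
        rw [hfS, mul_one, hfy]
        have hmem1 : Real.pi / 2 + η ∈ Set.Icc 0 Real.pi :=
          ⟨by linarith [Real.pi_pos], by linarith⟩
        have := Real.strictAntiOn_cos hmem1 hmem2 h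
        rwa [show Real.pi / 2 + η = Real.pi / 2 - (-η) by ring, Real.cos_pi_div_two_sub,
          Real.sin_neg] at this
    have hμSc : μ ((Metric.sphere (0 : EuclideanSpace ℝ (Fin N)) 1)ᶜ) = 0 := by
      rw [measure_compl Metric.isClosed_sphere.measurableSet (measure_ne_top μ _), hsupp]
      simp
    have hEbound : μ Ev ≤ μ A + μ A' :=
      calc μ Ev ≤ μ ((Ev ∩ Metric.sphere (0 : EuclideanSpace ℝ (Fin N)) 1)
            ∪ (Metric.sphere (0 : EuclideanSpace ℝ (Fin N)) 1)ᶜ) := by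
            refine measure_mono fun f hf => ?_
            by_cases hfS : f ∈ Metric.sphere (0 : EuclideanSpace ℝ (Fin N)) 1
            exacts [Or.inl ⟨hf, hfS⟩, Or.inr hfS]
        _ ≤ μ (Ev ∩ Metric.sphere (0 : EuclideanSpace ℝ (Fin N)) 1)
            + μ ((Metric.sphere (0 : EuclideanSpace ℝ (Fin N)) 1)ᶜ) := measure_union_le _ _
        _ = μ (Ev ∩ Metric.sphere (0 : EuclideanSpace ℝ (Fin N)) 1) := by
            rw [hμSc, add_zero]
        _ ≤ μ (A ∪ A') := measure_mono hsubset
        _ ≤ μ A + μ A' := measure_union_le _ _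
    have hA'A : μ A' = μ A := by
      set L : EuclideanSpace ℝ (Fin N) ≃ₗᵢ[ℝ] EuclideanSpace ℝ (Fin N) :=
        LinearIsometryEquiv.neg ℝ with hL
      have hpre : ⇑L ⁻¹' A' = A := by
        ext f
        have hLf : L f = -f := rfl
        simp only [Set.mem_preimage, hA'def, hAdef, Set.mem_setOf_eq, hLf, inner_neg_left,
          norm_neg]
        constructor <;> intro h <;> linarith
      calc μ A' = (μ.map L) A' := by rw [hinv L]
        _ = μ (⇑L ⁻¹' A') := Measure.map_apply L.continuous.measurable hA'open.measurableSet
        _ = μ A := by rw [hpre]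
    have hcone := cone_prob (by omega) μ hsupp hinv u hu hs0 hs1
    have hEN : μ Ev ≤ ENNReal.ofReal (2 * Real.exp (-((N : ℝ) - 1) * s ^ 2 / 2)) :=
      calc μ Ev ≤ μ A + μ A' := hEbound
        _ = μ A + μ A := by rw [hA'A]
        _ ≤ ENNReal.ofReal (Real.exp (-((N : ℝ) - 1) * s ^ 2 / 2))
            + ENNReal.ofReal (Real.exp (-((N : ℝ) - 1) * s ^ 2 / 2)) := add_le_add hcone hcone
        _ = ENNReal.ofReal (2 * Real.exp (-((N : ℝ) - 1) * s ^ 2 / 2)) := by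
            rw [← ENNReal.ofReal_add hexp_nonneg hexp_nonneg]; ring_nf
    calc (μ Ev).toReal ≤ (ENNReal.ofReal (2 * Real.exp (-((N : ℝ) - 1) * s ^ 2 / 2))).toReal :=
          ENNReal.toReal_mono ENNReal.ofReal_ne_top hEN
      _ = 2 * Real.exp (-((N : ℝ) - 1) * s ^ 2 / 2) := ENNReal.toReal_ofReal (by positivity)
  · have hempty : {f : EuclideanSpace ℝ (Fin N) |
        InnerProductGeometry.angle f y < Real.pi / 2 - η ∨
        Real.pi / 2 + η < InnerProductGeometry.angle f y} = ∅ := by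
      ext f
      simp only [Set.mem_setOf_eq, Set.mem_empty_iff_false, iff_false]
      push_neg at hη2 ⊢
      constructor
      · linarith [InnerProductGeometry.angle_nonneg f y]
      · linarith [InnerProductGeometry.angle_le_pi f y]
    rw [hempty]
    simp only [measure_empty, ENNReal.toReal_zero]
    positivity
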